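/- In a nonlinear additive Gaussian noise model, if ∂s_j(x)/∂x_j is constant in x (equals some c ∈ R for all x), then node j is a leaf of the causal DAG. -/

import Mathlib

lemma aux_update_eq_add {d : ℕ} (y : Fin d → ℝ) (m : Fin d) (u : ℝ) :
    Function.update y m u = y + (u - y m) • (Pi.single m 1 : Fin d → ℝ) := by
  funext k
  by_cases hk : k = m
  · subst hk; simp
  · simp [Function.update_of_ne hk, Pi.single_apply, hk]

lemma aux_fderiv_shift {d : ℕ} {F : (Fin d → ℝ) → ℝ} (hF : Differentiable ℝ F)
    (v x : Fin d → ℝ) : fderiv ℝ (fun z => F (z + v)) x = fderiv ℝ F (x + v) := by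
  have h : HasFDerivAt (fun z : Fin d → ℝ => F (z + v)) (fderiv ℝ F (x + v)) x := by
    have := (hF (x + v)).hasFDerivAt.comp x ((hasFDerivAt_id x).add_const v)
    simpa [Function.comp_def] using this
  exact h.fderiv

lemma aux_fderiv_update {d : ℕ} {F : (Fin d → ℝ) → ℝ} (hF : Differentiable ℝ F)
    (P : Finset (Fin d)) (hP : ∀ x y : Fin d → ℝ, (∀ k ∈ P, x k = y k) → F x = F y)
    {m : Fin d} (hm : m ∉ P) (y : Fin d → ℝ) (u : ℝ) :
    fderiv ℝ F (Function.update y m u) = fderiv ℝ F y := by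
  have h1 : Function.update y m u = y + (u - y m) • (Pi.single m 1 : Fin d → ℝ) :=
    aux_update_eq_add y m u
  have h2 : (fun z : Fin d → ℝ => F (z + (u - y m) • (Pi.single m 1 : Fin d → ℝ))) = F := by
    funext z
    refine hP _ _ (fun k hk => ?_)
    have hkm : k ≠ m := fun h => hm (h ▸ hk)
    simp [Pi.single_apply, hkm]
  rw [h1, ← aux_fderiv_shift hF ((u - y m) • (Pi.single m 1 : Fin d → ℝ)) y, h2]

lemma aux_affine_of_hasDerivAt (H : ℝ → ℝ) (b : ℝ) (h : ∀ t, HasDerivAt H b t) (t : ℝ) :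
    H t = H 0 + b * t := by
  have h2 : ∀ u : ℝ, HasDerivAt (fun t => H t - b * t) 0 u := by
    intro u
    simpa using (h u).fun_sub ((hasDerivAt_id u).const_mul b)
  have h3 := is_const_of_deriv_eq_zero (f := fun t => H t - b * t)
    (fun u => (h2 u).differentiableAt) (fun u => (h2 u).deriv) t 0
  simp only [mul_zero, sub_zero] at h3
  linarith

lemma aux_hasDerivAt_update {d : ℕ} {F : (Fin d → ℝ) → ℝ} (hF : Differentiable ℝ F)
    (x : Fin d → ℝ) (m : Fin d) (t : ℝ) :
    HasDerivAt (fun t => F (Function.update x m t))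
      (fderiv ℝ F (Function.update x m t) ((Pi.single m 1 : Fin d → ℝ))) t := by
  have hcurve : HasDerivAt (fun t : ℝ => Function.update x m t) ((Pi.single m 1 : Fin d → ℝ)) t := by
    have h1 : (fun t : ℝ => Function.update x m t)
        = fun t => x + (t - x m) • (Pi.single m 1 : Fin d → ℝ) := by
      funext t; exact aux_update_eq_add x m t
    rw [h1]
    simpa using (((hasDerivAt_id t).sub_const (x m)).smul_const ((Pi.single m 1 : Fin d → ℝ))).const_add x
  simpa [Function.comp_def] using (hF _).hasFDerivAt.comp_hasDerivAt t hcurve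


/-- in a nonlinear additive Gaussian noise model, if the diagonal
entry `∂ s_j / ∂ x_j` of the score's Jacobian is constant in `x`, then `j` is a
leaf of the causal DAG. -/
theorem score_diag_const_implies_leaf {d : ℕ}
    (pa : Fin d → Finset (Fin d)) (f : Fin d → (Fin d → ℝ) → ℝ)
    (σ : Fin d → ℝ) (hσ : ∀ i, 0 < σ i)
    (hnotself : ∀ i, i ∉ pa i)
    (ord : Fin d → ℕ) (hord : ∀ i, ∀ k ∈ pa i, ord k < ord i)
    (hdep : ∀ i, ∀ x y : Fin d → ℝ, (∀ k ∈ pa i, x k = y k) → f i x = f i y)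
    (hdiff : ∀ i, ContDiff ℝ 2 (f i))
    (hnonlin : ∀ i, ∀ k ∈ pa i, ∃ x : Fin d → ℝ,
      ¬ ∃ a b : ℝ, ∀ t : ℝ, f i (Function.update x k t) = a + b * t)
    (s : Fin d → (Fin d → ℝ) → ℝ)
    (hs : ∀ j x, s j x =
      -((x j - f j x) / σ j ^ 2)
      + ∑ i ∈ Finset.univ.filter (fun i => j ∈ pa i),
          fderiv ℝ (f i) x (Pi.single j 1) * ((x i - f i x) / σ i ^ 2))
    (j : Fin d)
    (hconst : ∃ c : ℝ, ∀ x, fderiv ℝ (s j) x (Pi.single j 1) = c) :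
    ∀ i, j ∉ pa i := by

  classical
  obtain ⟨c, hc⟩ := hconst
  intro i₀ hji₀
  -- choose a child `i` of `j` with maximal `ord`
  obtain ⟨i, hiS, hmax⟩ := Finset.exists_max_image
    (Finset.univ.filter (fun i => j ∈ pa i)) ord ⟨i₀, by simp [hji₀]⟩
  have hji : j ∈ pa i := by simpa using hiS
  have hij : i ≠ j := fun h => hnotself j (h ▸ hji)
  have hinotpaj : i ∉ pa j := fun h => absurd (hord j i h) (not_lt.2 (le_of_lt (hord i j hji)))
  have hnotpai' : ∀ i', j ∈ pa i' → i' ≠ i → i ∉ pa i' := by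
    intro i' hji' hne hii'
    have h1 : ord i' ≤ ord i := hmax i' (by simp [hji'])
    have h2 : ord i < ord i' := hord i' i hii'
    omega
  -- differentiability facts
  have hfd : ∀ k, Differentiable ℝ (f k) := fun k => (hdiff k).differentiable (by norm_num)
  have hg : ∀ k, Differentiable ℝ (fun x => fderiv ℝ (f k) x (Pi.single j 1)) := by
    intro k
    have h1 : ContDiff ℝ 1 (fderiv ℝ (f k)) := (hdiff k).fderiv_right (by norm_num)
    exact (h1.clm_apply contDiff_const).differentiable one_ne_zero
  have hproj : ∀ k : Fin d, Differentiable ℝ (fun x : Fin d → ℝ => x k) := fun k =>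
    (ContinuousLinearMap.proj k : (Fin d → ℝ) →L[ℝ] ℝ).differentiable
  have hsd : Differentiable ℝ (s j) := by
    have hsfun : s j = fun x => -((x j - f j x) / σ j ^ 2)
        + ∑ i ∈ Finset.univ.filter (fun i => j ∈ pa i),
            fderiv ℝ (f i) x (Pi.single j 1) * ((x i - f i x) / σ i ^ 2) :=
      funext (hs j)
    have hnum : ∀ k : Fin d, Differentiable ℝ (fun x : Fin d → ℝ => (x k - f k x) / σ k ^ 2) := by
      intro k
      have h1 : Differentiable ℝ (fun x : Fin d → ℝ => x k - f k x) := (hproj k).sub (hfd k)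
      simp only [div_eq_mul_inv]; exact h1.mul_const _
    rw [hsfun]
    refine Differentiable.add ?_ ?_
    · exact (hnum j).neg
    · exact Differentiable.fun_sum fun k _ => (hg k).mul (hnum k)
  -- the score coordinate is affine along the `j`-direction
  have hE : ∀ (x : Fin d → ℝ) (t : ℝ),
      s j (Function.update x j t) = s j x + c * (t - x j) := by
    intro x t
    have haff := aux_affine_of_hasDerivAt (fun t => s j (Function.update x j t)) c
      (fun t => by
        have := aux_hasDerivAt_update hsd x j t
        rwa [hc] at this)
    have h1 := haff t
    have h2 := haff (x j)
    rw [Function.update_eq_self] at h2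
    have : c * (t - x j) = c * t - c * (x j) := by ring
    rw [this]; linarith
  -- the witness of nonlinearity
  obtain ⟨x₀, hx₀⟩ := hnonlin i j hji
  -- two-parameter family of points
  set q : ℝ → ℝ → (Fin d → ℝ) :=
    fun t u => Function.update (Function.update x₀ j t) i u with hq
  have key : ∀ t u, s j (q t u) = s j (Function.update x₀ i u) + c * (t - x₀ j) := by
    intro t u
    have hqcomm : q t u = Function.update (Function.update x₀ i u) j t := by
      simp only [hq]
      exact Function.update_comm hij.symm t u x₀
    rw [hqcomm, hE (Function.update x₀ i u) t,
      Function.update_of_ne (Ne.symm hij)]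
  -- computing the u-increment of the score
  have hdiffu : ∀ t : ℝ, s j (q t 1) - s j (q t 0)
      = fderiv ℝ (f i) (Function.update x₀ j t) (Pi.single j 1) / σ i ^ 2 := by
    intro t
    have hagree : ∀ (u₁ u₂ : ℝ) (P : Finset (Fin d)), i ∉ P →
        ∀ k ∈ P, (q t u₁) k = (q t u₂) k := by
      intro u₁ u₂ P hiP k hk
      have hki : k ≠ i := fun h => hiP (h ▸ hk)
      simp [hq, Function.update_of_ne hki]
    have hfdinv : ∀ (k : Fin d), i ∉ pa k → ∀ u : ℝ,
        fderiv ℝ (f k) (q t u) = fderiv ℝ (f k) (Function.update x₀ j t) := by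
      intro k hik u
      exact aux_fderiv_update (hfd k) (pa k) (hdep k) hik (Function.update x₀ j t) u
    have hfj : f j (q t 1) = f j (q t 0) := hdep j _ _ (hagree 1 0 (pa j) hinotpaj)
    have hqj : ∀ u : ℝ, (q t u) j = t := by
      intro u; simp [hq, Function.update_of_ne (Ne.symm hij)]
    have hsum : ∑ k ∈ Finset.univ.filter (fun k => j ∈ pa k),
        (fderiv ℝ (f k) (q t 1) (Pi.single j 1) * (((q t 1) k - f k (q t 1)) / σ k ^ 2)
          - fderiv ℝ (f k) (q t 0) (Pi.single j 1) * (((q t 0) k - f k (q t 0)) / σ k ^ 2))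
        = fderiv ℝ (f i) (Function.update x₀ j t) (Pi.single j 1) / σ i ^ 2 := by
      rw [Finset.sum_eq_single_of_mem i hiS]
      · have h1 := hfdinv i (hnotself i) 1
        have h0 := hfdinv i (hnotself i) 0
        have hfi : f i (q t 1) = f i (q t 0) := hdep i _ _ (hagree 1 0 (pa i) (hnotself i))
        have hq1 : (q t 1) i = 1 := by simp [hq]
        have hq0 : (q t 0) i = 0 := by simp [hq]
        rw [h1, h0, hfi, hq1, hq0]
        ring
      · intro k hk hki
        have hjk : j ∈ pa k := by simpa using hk
        have hik : i ∉ pa k := hnotpai' k hjk hki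
        have hfk : f k (q t 1) = f k (q t 0) := hdep k _ _ (hagree 1 0 (pa k) hik)
        have hqk : (q t 1) k = (q t 0) k := by
          simp [hq, Function.update_of_ne hki]
        rw [hfdinv k hik 1, hfdinv k hik 0, hfk, hqk]
        ring
    rw [hs j (q t 1), hs j (q t 0)]
    rw [Finset.sum_sub_distrib] at hsum
    rw [hfj, hqj 1, hqj 0]
    linarith
  -- the mixed increment identity forces the fderiv to be constant along the j-line
  have hGconst : ∀ t : ℝ, fderiv ℝ (f i) (Function.update x₀ j t) (Pi.single j 1)
      = fderiv ℝ (f i) (Function.update x₀ j 0) (Pi.single j 1) := by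
    intro t
    have h1 := hdiffu t
    have h0 := hdiffu 0
    have e11 := key t 1
    have e10 := key t 0
    have e01 := key 0 1
    have e00 := key 0 0
    have heq : fderiv ℝ (f i) (Function.update x₀ j t) (Pi.single j 1) / σ i ^ 2
        = fderiv ℝ (f i) (Function.update x₀ j 0) (Pi.single j 1) / σ i ^ 2 := by
      linarith
    have hσi : (σ i : ℝ) ^ 2 ≠ 0 := (pow_pos (hσ i) 2).ne'
    exact (div_left_inj' hσi).mp heq
  -- conclude: f i is affine in the j-th coordinate, contradiction
  refine hx₀ ⟨f i (Function.update x₀ j 0),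
    fderiv ℝ (f i) (Function.update x₀ j 0) (Pi.single j 1), fun t => ?_⟩
  have hder : ∀ t : ℝ, HasDerivAt (fun t => f i (Function.update x₀ j t))
      (fderiv ℝ (f i) (Function.update x₀ j 0) (Pi.single j 1)) t := by
    intro t
    have := aux_hasDerivAt_update (hfd i) x₀ j t
    rwa [hGconst t] at this
  have := aux_affine_of_hasDerivAt _ _ hder t
  simpa using this
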